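/- Let Ξ be a minimal and aperiodic right-infinite subshift over a finite alphabet with language ℒ. For every privileged word u ∈ ℒ one has ã(u) = Σ_{r ∈ S(u)} a(r). In particular the cardinality of S(u) is at most ã(u). -/
import Mathlib


open scoped ENNReal Classical

noncomputable section

namespace Arx1111

variable {A : Type*}

/-! ### Words and infinite words -/

/-- The left shift on right-infinite words. -/
def shift (ξ : ℕ → A) : ℕ → A := fun n => ξ (n + 1)

/-- The finite word `u` occurs in the infinite word `ξ` at position `k`. -/
def FactorAt (u : List A) (ξ : ℕ → A) (k : ℕ) : Prop :=
  u = (List.range u.length).map fun i => ξ (k + i)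

/-- `u` is a factor of the infinite word `ξ`. -/
def IsFactorOf (u : List A) (ξ : ℕ → A) : Prop := ∃ k, FactorAt u ξ k

/-- `u` is a prefix of the infinite word `ξ`. -/
def PrefixOfInf (u : List A) (ξ : ℕ → A) : Prop := FactorAt u ξ 0

/-- `u` is a proper prefix of `v`. -/
def PPrefix (u v : List A) : Prop := u <+: v ∧ u ≠ v

/-- The `n`-th power `u^n` of a finite word `u`. -/
def wordPow (u : List A) : ℕ → List A
  | 0 => []
  | n + 1 => u ++ wordPow u n

/-- The language of a set of infinite words: all finite factors of its elements. -/
def language (Ξ : Set (ℕ → A)) : Set (List A) := {u | ∃ ξ ∈ Ξ, IsFactorOf u ξ}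

/-! ### Subshifts -/

/-- `Ξ` is a (right-infinite) subshift: nonempty, closed, shift-invariant. -/
structure IsSubshift [TopologicalSpace A] (Ξ : Set (ℕ → A)) : Prop where
  nonempty : Ξ.Nonempty
  isClosed : IsClosed Ξ
  shift_mem : ∀ ξ ∈ Ξ, shift ξ ∈ Ξ

/-- Minimality: every orbit is dense in `Ξ`. -/
def IsMinimal [TopologicalSpace A] (Ξ : Set (ℕ → A)) : Prop :=
  ∀ ξ ∈ Ξ, Ξ ⊆ closure (Set.range fun n => shift^[n] ξ)

/-- Aperiodicity. -/
def Aperiodic (Ξ : Set (ℕ → A)) : Prop :=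
  ∀ ξ ∈ Ξ, ∀ n : ℕ, shift^[n] ξ = ξ → n = 0

/-! ### Occurrences, complete first returns, privileged words -/

variable [DecidableEq A]

/-- The number of occurrences of `u` as a factor of `w`. -/
def occCount (u w : List A) : ℕ :=
  ((List.range (w.length + 1)).filter fun k => (w.drop k).take u.length == u).length

/-- `u'` is a complete first return to `u`: if `u` is empty, `u'` is a single letter;
otherwise `u` is a prefix and a suffix of `u'` and occurs exactly twice in `u'`. -/
def IsCFR (u u' : List A) : Prop :=
  if u = [] then u'.length = 1
  else u <+: u' ∧ u <:+ u' ∧ occCount u u' = 2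

/-- Privileged words of order `n`. -/
inductive PrivOrder : ℕ → List A → Prop where
  | zero : PrivOrder 0 []
  | succ {n : ℕ} {u u' : List A} : PrivOrder n u → IsCFR u u' → PrivOrder (n + 1) u'

/-- A word is privileged if it is privileged of some order. -/
def IsPrivileged (u : List A) : Prop := ∃ n, PrivOrder n u

/-- `u'` is a complete first return to `u` inside the language `L`. -/
def CFRin (L : Set (List A)) (u u' : List A) : Prop := u' ∈ L ∧ IsCFR u u'

/-- `u` is right-special for the language `L`. -/
def RightSpecial (L : Set (List A)) (u : List A) : Prop :=
  u ∈ L ∧ ∃ a b : A, a ≠ b ∧ u ++ [a] ∈ L ∧ u ++ [b] ∈ L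

/-- `a(v)`: number of one-letter right extensions of `v` in `L`, minus one. -/
def aext (L : Set (List A)) (v : List A) : ℕ := Nat.card {a : A // v ++ [a] ∈ L} - 1

/-- `ã(v)`: number of complete first returns to `v` in `L`, minus one, if `v` is
privileged, and `0` otherwise. -/
def atil (L : Set (List A)) (v : List A) : ℕ :=
  if IsPrivileged v then Nat.card {u' : List A // CFRin L v u'} - 1 else 0

/-- `S(u)`: right-special words `r` with `u ⪯ r ≺ u'` for some complete first return `u'`. -/
def Sset (L : Set (List A)) (u : List A) : Set (List A) :=
  {r | RightSpecial L r ∧ ∃ u', CFRin L u u' ∧ u <+: r ∧ PPrefix r u'}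

/-- Right-special balanced: between a privileged word and any of its complete first
returns there is exactly one right-special word. -/
def RSBalanced (L : Set (List A)) : Prop :=
  ∀ u, IsPrivileged u → u ∈ L → ∀ u', CFRin L u u' →
    ∃! r, RightSpecial L r ∧ u <+: r ∧ PPrefix r u'

/-- `r'` is the shortest right-special word having `r` as a proper prefix. -/
def IsShortestRSExt (L : Set (List A)) (r r' : List A) : Prop :=
  RightSpecial L r' ∧ PPrefix r r' ∧
    ∀ r'', RightSpecial L r'' → PPrefix r r'' → r'.length ≤ r''.length

/-- `r = φ⁽⁰⁾(u)`: `r` is the shortest right-special word having `u` as a prefix. -/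
def IsPhi0 (L : Set (List A)) (u r : List A) : Prop :=
  RightSpecial L r ∧ u <+: r ∧ ∀ r', RightSpecial L r' → u <+: r' → r.length ≤ r'.length

/-- `H⁽¹⁾`: pairs of distinct one-letter right extensions of a common word. -/
def H1 (L : Set (List A)) (v₁ v₂ : List A) : Prop :=
  v₁ ∈ L ∧ v₂ ∈ L ∧ v₁ ≠ v₂ ∧ ∃ (w : List A) (a b : A), v₁ = w ++ [a] ∧ v₂ = w ++ [b]

/-- `H̃⁽¹⁾`: pairs of distinct complete first returns to a common privileged word. -/
def TildeH1 (L : Set (List A)) (u₁ u₂ : List A) : Prop :=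
  u₁ ≠ u₂ ∧ ∃ u, IsPrivileged u ∧ CFRin L u u₁ ∧ CFRin L u u₂

/-- Length of the longest common prefix of two finite words. -/
def lcpLenW (u v : List A) : ℕ := sSup {n | n ≤ u.length ∧ u.take n = v.take n}

/-- Length of the longest common privileged prefix of two finite words. -/
def weeLenW (u v : List A) : ℕ :=
  sSup {n | ∃ w : List A, IsPrivileged w ∧ w.length = n ∧ w <+: u ∧ w <+: v}

/-- `φ⁽¹⁾`: the pair of one-letter extensions of `u₁ ∧ u₂` which are prefixes of
`u₁` resp. `u₂`. -/
def phi1 (u₁ u₂ : List A) : List A × List A :=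
  (u₁.take (lcpLenW u₁ u₂ + 1), u₂.take (lcpLenW u₁ u₂ + 1))

/-! ### Bounded powers and repulsiveness -/

/-- Bounded powers: there is `p` such that no `(p+1)`-th power of a nonempty word
belongs to `L`. -/
def BoundedPowers (L : Set (List A)) : Prop :=
  ∃ p : ℕ, ∀ u ∈ L, u ≠ [] → wordPow u (p + 1) ∉ L

/-- The set of ratios `(|W|-|w|)/|w|` over words `w, W ∈ L` with `w` a nonempty proper
prefix and a suffix of `W`. -/
def repulsionSet (L : Set (List A)) : Set ℝ :=
  {x | ∃ w W : List A, w ∈ L ∧ W ∈ L ∧ w ≠ [] ∧ PPrefix w W ∧ w <:+ W ∧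
        x = ((W.length : ℝ) - (w.length : ℝ)) / (w.length : ℝ)}

/-- The index of repulsiveness `ℓ`. -/
def repulsionIndex (L : Set (List A)) : ℝ := sInf (repulsionSet L)

/-- Repulsive: `ℓ > 0`. -/
def Repulsive (L : Set (List A)) : Prop := 0 < repulsionIndex L

/-! ### Privileged prefixes of infinite words -/

/-- The `n`-th privileged prefix `ξ̃ₙ` of an infinite word `ξ`. -/
def privPrefix (ξ : ℕ → A) : ℕ → List A
  | 0 => []
  | n + 1 =>
    if h : ∃ u', IsCFR (privPrefix ξ n) u' ∧ PrefixOfInf u' ξ then h.choose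
    else privPrefix ξ n

/-- The order `ind(ξ ⩏ η)` of the longest common privileged prefix of two infinite
words; the word `ξ ⩏ η` itself is `privPrefix ξ (weeInd ξ η)`. -/
def weeInd (ξ η : ℕ → A) : ℕ := sSup {n | privPrefix ξ n = privPrefix η n}

/-- Length of the longest common prefix `ξ ∧ η` of two distinct infinite words. -/
def lcpLenInf (ξ η : ℕ → A) : ℕ := sInf {n | ξ n ≠ η n}

/-! ### Choice functions, weight functions and the metrics -/

/-- A choice function for `Ξ`. -/
def IsChoiceFun (Ξ : Set (ℕ → A)) (τ : List A → ℕ → A) : Prop :=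
  (∀ v ∈ language Ξ, τ v ∈ Ξ ∧ PrefixOfInf v (τ v)) ∧
  (∀ v ∈ language Ξ, ∀ w ∈ language Ξ, v.length < w.length →
    PrefixOfInf w (τ v) → τ w = τ v)

/-- A weight function. -/
structure IsWeight (δ : ℕ → ℝ) : Prop where
  pos : ∀ n, 0 < δ n
  strictAnti : StrictAnti δ
  tendsto_zero : Filter.Tendsto δ Filter.atTop (nhds 0)
  submul : ∃ c : ℝ, 0 < c ∧ ∀ a b : ℕ, δ (a * b) ≤ c * δ a * δ b
  doubling : ∃ c : ℝ, 0 < c ∧ ∀ a : ℕ, c * δ a ≤ δ (2 * a)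

variable [TopologicalSpace A]

/-- The metric `d_τ` associated to the right-special horizontal edges. -/
def dTau (Ξ : Set (ℕ → A)) (δ : ℕ → ℝ) (τ : List A → ℕ → A) (ξ η : ℕ → A) : ℝ≥0∞ :=
  ⨆ f : {f : (ℕ → A) → ℝ // ContinuousOn f Ξ ∧
      ∀ v₁ v₂, H1 (language Ξ) v₁ v₂ → |f (τ v₁) - f (τ v₂)| ≤ δ (lcpLenW v₁ v₂)},
    ENNReal.ofReal |f.1 ξ - f.1 η|

/-- The metric `d̃_τ` associated to the privileged horizontal edges. -/
def dTilTau (Ξ : Set (ℕ → A)) (δ : ℕ → ℝ) (τ : List A → ℕ → A) (ξ η : ℕ → A) : ℝ≥0∞ :=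
  ⨆ f : {f : (ℕ → A) → ℝ // ContinuousOn f Ξ ∧
      ∀ u₁ u₂, TildeH1 (language Ξ) u₁ u₂ → |f (τ u₁) - f (τ u₂)| ≤ δ (weeLenW u₁ u₂)},
    ENNReal.ofReal |f.1 ξ - f.1 η|

/-- `d_inf`. -/
def dInf (Ξ : Set (ℕ → A)) (δ : ℕ → ℝ) (ξ η : ℕ → A) : ℝ≥0∞ :=
  ⨅ τ : {τ // IsChoiceFun Ξ τ}, dTau Ξ δ τ.1 ξ η

/-- `d_sup`. -/
def dSup (Ξ : Set (ℕ → A)) (δ : ℕ → ℝ) (ξ η : ℕ → A) : ℝ≥0∞ :=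
  ⨆ τ : {τ // IsChoiceFun Ξ τ}, dTau Ξ δ τ.1 ξ η

/-- `d̃_inf`. -/
def dTilInf (Ξ : Set (ℕ → A)) (δ : ℕ → ℝ) (ξ η : ℕ → A) : ℝ≥0∞ :=
  ⨅ τ : {τ // IsChoiceFun Ξ τ}, dTilTau Ξ δ τ.1 ξ η

/-- `d̃_sup`. -/
def dTilSup (Ξ : Set (ℕ → A)) (δ : ℕ → ℝ) (ξ η : ℕ → A) : ℝ≥0∞ :=
  ⨆ τ : {τ // IsChoiceFun Ξ τ}, dTilTau Ξ δ τ.1 ξ η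

/-- `β̃_τ(ξ̃ₙ)`: equals `1` if the longest common privileged prefix of `τ(ξ̃ₙ)` and `ξ`
is `ξ̃ₙ`, and `0` otherwise. -/
def btil (τ : List A → ℕ → A) (ξ : ℕ → A) (n : ℕ) : ℝ≥0∞ :=
  if privPrefix (τ (privPrefix ξ n)) (weeInd (τ (privPrefix ξ n)) ξ) = privPrefix ξ n
  then 1 else 0

/-! ### Zeta functions -/

/-- `ζ_k(s)` (with the convention `0⁰ = 0`). -/
def zeta (L : Set (List A)) (δ : ℕ → ℝ) (k : ℕ) (s : ℝ) : ℝ≥0∞ :=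
  ∑' v : L, (if aext L (v : List A) = 0 then 0 else ((aext L (v : List A) : ℝ≥0∞)) ^ k) *
    ENNReal.ofReal (δ (v : List A).length ^ s)

/-- `ζ̃_k(s)` (with the convention `0⁰ = 0`). -/
def zetaTil (L : Set (List A)) (δ : ℕ → ℝ) (k : ℕ) (s : ℝ) : ℝ≥0∞ :=
  ∑' v : L, (if atil L (v : List A) = 0 then 0 else ((atil L (v : List A) : ℝ≥0∞)) ^ k) *
    ENNReal.ofReal (δ (v : List A).length ^ s)

/-- Almost finite privileged rank. -/
def AlmostFiniteRank (L : Set (List A)) : Prop :=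
  ∃ a b : ℝ, 0 < a ∧ 0 < b ∧ ∀ u, IsPrivileged u → u ∈ L → 2 ≤ u.length →
    (Nat.card {u' : List A // CFRin L u u'} : ℝ) ≤ a * (Real.log u.length) ^ b


/-! ### Auxiliary development -/

section Aux
variable {A : Type*}

/-- the factor of `ξ` at position `k` of length `n`. -/
def wordAt (ξ : ℕ → A) (k n : ℕ) : List A := (List.range n).map fun i => ξ (k + i)

@[simp] lemma length_wordAt (ξ : ℕ → A) (k n : ℕ) : (wordAt ξ k n).length = n := by
  simp [wordAt]

lemma factorAt_iff {u : List A} {ξ : ℕ → A} {k : ℕ} :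
    FactorAt u ξ k ↔ u = wordAt ξ k u.length := Iff.rfl

lemma factorAt_wordAt (ξ : ℕ → A) (k n : ℕ) : FactorAt (wordAt ξ k n) ξ k := by
  rw [factorAt_iff, length_wordAt]

lemma wordAt_take (ξ : ℕ → A) (k : ℕ) {m n : ℕ} (h : m ≤ n) :
    (wordAt ξ k n).take m = wordAt ξ k m := by
  simp [wordAt, ← List.map_take, List.take_range, Nat.min_eq_left h]

lemma wordAt_prefix (ξ : ℕ → A) (k : ℕ) {m n : ℕ} (h : m ≤ n) :
    wordAt ξ k m <+: wordAt ξ k n := by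
  rw [← wordAt_take ξ k h]; exact List.take_prefix _ _

lemma wordAt_drop (ξ : ℕ → A) (k m n : ℕ) :
    (wordAt ξ k n).drop m = wordAt ξ (k + m) (n - m) := by
  apply List.ext_getElem
  · simp [wordAt]
  · intro i h1 h2
    simp [wordAt]
    congr 1
    omega

lemma prefix_wordAt_iff {u : List A} {ξ : ℕ → A} {k n : ℕ} :
    u <+: wordAt ξ k n ↔ u.length ≤ n ∧ FactorAt u ξ k := by
  constructor
  · intro h
    have hl : u.length ≤ n := by simpa using h.length_le
    refine ⟨hl, ?_⟩
    rw [factorAt_iff, ← wordAt_take ξ k hl, ← List.prefix_iff_eq_take]; exact h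
  · rintro ⟨hl, h⟩
    rw [factorAt_iff] at h
    rw [h]; exact wordAt_prefix ξ k hl

lemma factorAt_prefix {u w : List A} {ξ : ℕ → A} {k : ℕ} (hp : u <+: w)
    (h : FactorAt w ξ k) : FactorAt u ξ k := by
  rw [factorAt_iff] at h
  have : u <+: wordAt ξ k w.length := h ▸ hp
  exact (prefix_wordAt_iff.1 this).2

lemma factorAt_drop {w : List A} {ξ : ℕ → A} {k : ℕ} (h : FactorAt w ξ k) (m : ℕ) :
    FactorAt (w.drop m) ξ (k + m) := by
  rw [factorAt_iff] at h
  rw [h, wordAt_drop]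
  exact factorAt_wordAt _ _ _

lemma mem_language_of_factorAt {Ξ : Set (ℕ → A)} {u : List A} {ξ : ℕ → A} {k : ℕ}
    (hξ : ξ ∈ Ξ) (h : FactorAt u ξ k) : u ∈ language Ξ := ⟨ξ, hξ, k, h⟩

lemma wordAt_mem_language {Ξ : Set (ℕ → A)} {ξ : ℕ → A} (hξ : ξ ∈ Ξ) (k n : ℕ) :
    wordAt ξ k n ∈ language Ξ := mem_language_of_factorAt hξ (factorAt_wordAt ξ k n)

lemma language_prefix_closed {Ξ : Set (ℕ → A)} {u w : List A} (hp : u <+: w)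
    (hw : w ∈ language Ξ) : u ∈ language Ξ := by
  obtain ⟨ξ, hξ, k, h⟩ := hw
  exact ⟨ξ, hξ, k, factorAt_prefix hp h⟩

lemma exists_extension {Ξ : Set (ℕ → A)} {w : List A} (hw : w ∈ language Ξ) :
    ∃ a : A, w ++ [a] ∈ language Ξ := by
  obtain ⟨ξ, hξ, k, h⟩ := hw
  refine ⟨ξ (k + w.length), mem_language_of_factorAt hξ (k := k) ?_⟩
  rw [factorAt_iff] at h ⊢
  have hw : wordAt ξ k (w.length + 1) = wordAt ξ k w.length ++ [ξ (k + w.length)] := by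
    simp [wordAt, List.range_succ]
  have hlen : (w ++ [ξ (k + w.length)]).length = w.length + 1 := by simp
  rw [hlen, hw, ← h]


variable [DecidableEq A]

def occFinset (u w : List A) : Finset ℕ :=
  (Finset.range (w.length + 1)).filter fun k => u <+: w.drop k

lemma occ_cond_iff {u w : List A} {k : ℕ} :
    ((w.drop k).take u.length == u) = true ↔ u <+: w.drop k := by
  rw [beq_iff_eq, List.prefix_iff_eq_take]
  exact ⟨fun h => h.symm, fun h => h.symm⟩

lemma filter_range_len (p : ℕ → Prop) [DecidablePred p] (pb : ℕ → Bool) (hpb : ∀ k, pb k = true ↔ p k) (m : ℕ) :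
    (List.filter pb (List.range m)).length = ((Finset.range m).filter p).card := by
  induction m with
  | zero => simp
  | succ n ih =>
    rw [List.range_succ, List.filter_append, Finset.range_add_one, Finset.filter_insert]
    by_cases h : p n
    · rw [List.length_append]
      have : (List.filter pb [n]).length = 1 := by simp [(hpb n).2 h]
      rw [this, if_pos h, Finset.card_insert_of_notMem (by simp), ih]
    · have : (List.filter pb [n]).length = 0 := by
        simp only [List.filter, List.length_nil]
        have : pb n = false := by
          rw [Bool.eq_false_iff]; intro hc; exact h ((hpb n).1 hc)
        simp [this]
      simp only [List.length_append, this, if_neg h, ih, Nat.add_zero]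

lemma occCount_eq_card (u w : List A) : occCount u w = (occFinset u w).card := by
  unfold occCount occFinset
  exact filter_range_len (fun k => u <+: w.drop k) (fun k => (w.drop k).take u.length == u)
    (fun k => occ_cond_iff) (w.length + 1)

lemma mem_occFinset {u w : List A} {k : ℕ} :
    k ∈ occFinset u w ↔ k ≤ w.length ∧ u <+: w.drop k := by
  simp [occFinset, Nat.lt_succ_iff]

lemma mem_occFinset_le {u w : List A} {k : ℕ} (h : k ∈ occFinset u w) :
    k + u.length ≤ w.length := by
  rw [mem_occFinset] at h
  have := h.2.length_le
  simp only [List.length_drop] at this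
  omega

lemma zero_mem_occFinset {u w : List A} (h : u <+: w) : 0 ∈ occFinset u w := by
  rw [mem_occFinset]; exact ⟨Nat.zero_le _, by simpa using h⟩

lemma occFinset_mono {u w' w : List A} (hp : w' <+: w) : occFinset u w' ⊆ occFinset u w := by
  intro k hk
  rw [mem_occFinset] at hk ⊢
  exact ⟨le_trans hk.1 hp.length_le, hk.2.trans (hp.drop k)⟩

lemma occFinset_self {u : List A} (hu : u ≠ []) : occFinset u u = {0} := by
  ext k
  rw [mem_occFinset, Finset.mem_singleton]
  constructor
  · rintro ⟨h1, h2⟩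
    have := h2.length_le
    simp only [List.length_drop] at this
    have hul : 0 < u.length := List.length_pos_iff.2 hu
    omega
  · rintro rfl
    exact ⟨Nat.zero_le _, by simp⟩

lemma occCount_self {u : List A} (hu : u ≠ []) : occCount u u = 1 := by
  rw [occCount_eq_card, occFinset_self hu]; simp

lemma occFinset_take {u w : List A} {m : ℕ} (hm : m ≤ w.length) :
    occFinset u (w.take m) = (occFinset u w).filter fun k => k + u.length ≤ m := by
  ext k
  rw [Finset.mem_filter, mem_occFinset, mem_occFinset]
  have hlt : (w.take m).length = m := by simp; omega
  rw [hlt]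
  constructor
  · rintro ⟨h1, h2⟩
    rw [List.drop_take] at h2
    rw [List.prefix_take_iff] at h2
    refine ⟨⟨by omega, h2.1⟩, by omega⟩
  · rintro ⟨⟨h1, h2⟩, h3⟩
    refine ⟨by omega, ?_⟩
    rw [List.drop_take, List.prefix_take_iff]
    exact ⟨h2, by omega⟩

lemma occFinset_snoc {u w : List A} {a : A} (hu : u ≠ []) :
    occFinset u (w ++ [a]) =
      occFinset u w ∪ (if u <:+ (w ++ [a]) then {w.length + 1 - u.length} else ∅) := by
  have hul : 0 < u.length := List.length_pos_iff.2 hu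
  ext k
  rw [Finset.mem_union, mem_occFinset, mem_occFinset]
  simp only [List.length_append, List.length_singleton]
  constructor
  · rintro ⟨h1, h2⟩
    by_cases hk : k ≤ w.length
    · rw [List.drop_append_of_le_length hk] at h2
      rw [List.prefix_concat_iff] at h2
      rcases h2 with h2 | h2
      · right
        have hlen := congrArg List.length h2
        simp only [List.length_append, List.length_singleton, List.length_drop] at hlen
        have hk' : k = w.length + 1 - u.length := by omega
        rw [if_pos ?_]
        · simp [hk']
        · rw [List.suffix_iff_eq_drop]
          have : (w ++ [a]).length - u.length = k := by simp; omega
          rw [this, List.drop_append_of_le_length hk, ← h2]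
      · exact Or.inl ⟨hk, h2⟩
    · exfalso
      have hk' : k = w.length + 1 := by omega
      subst hk'
      have h3 := h2.length_le
      rw [List.length_drop] at h3
      simp only [List.length_append, List.length_singleton] at h3
      omega
  · rintro (⟨h1, h2⟩ | h2)
    · refine ⟨by omega, ?_⟩
      rw [List.drop_append_of_le_length h1]
      exact h2.trans (List.prefix_append _ _)
    · by_cases hs : u <:+ w ++ [a]
      · rw [if_pos hs] at h2
        rw [Finset.mem_singleton] at h2
        subst h2
        have hl := hs.length_le
        simp only [List.length_append, List.length_singleton] at hl
        refine ⟨by omega, ?_⟩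
        rw [List.suffix_iff_eq_drop] at hs
        have : (w ++ [a]).length - u.length = w.length + 1 - u.length := by simp
        rw [this] at hs
        rw [← hs]
      · rw [if_neg hs] at h2
        simp at h2

lemma occFinset_snoc_disjoint {u w : List A} {a : A} (hu : u ≠ []) :
    Disjoint (occFinset u w) (if u <:+ (w ++ [a]) then ({w.length + 1 - u.length} : Finset ℕ) else ∅) := by
  have hul : 0 < u.length := List.length_pos_iff.2 hu
  by_cases hs : u <:+ w ++ [a]
  · rw [if_pos hs]
    rw [Finset.disjoint_singleton_right]
    intro hc
    have h1 := mem_occFinset_le hc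
    have hl := hs.length_le
    simp only [List.length_append, List.length_singleton] at hl
    omega
  · simp [if_neg hs]



/-! CFR lemmas (u ≠ []) -/

lemma cfr_parts {u u' : List A} (hu : u ≠ []) (hc : IsCFR u u') :
    u <+: u' ∧ u <:+ u' ∧ occCount u u' = 2 := by
  rw [IsCFR, if_neg hu] at hc; exact hc

lemma cfr_length_lt {u u' : List A} (hu : u ≠ []) (hc : IsCFR u u') :
    u.length < u'.length := by
  obtain ⟨h1, _, h3⟩ := cfr_parts hu hc
  rcases lt_or_eq_of_le h1.length_le with h | h
  · exact h
  · exfalso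
    rw [h1.eq_of_length h] at h3
    rw [occCount_self] at h3
    · omega
    · intro hc'; subst hc'; exact hu (List.prefix_nil.1 h1)

lemma cfr_occFinset {u u' : List A} (hu : u ≠ []) (hc : IsCFR u u') :
    occFinset u u' = {0, u'.length - u.length} := by
  obtain ⟨h1, h2, h3⟩ := cfr_parts hu hc
  have hlt := cfr_length_lt hu hc
  have hd0 : (0 : ℕ) ∈ occFinset u u' := zero_mem_occFinset h1
  have hdd : u'.length - u.length ∈ occFinset u u' := by
    rw [mem_occFinset]
    refine ⟨by omega, ?_⟩
    rw [List.suffix_iff_eq_drop] at h2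
    rw [← h2]
  have hne : (0 : ℕ) ≠ u'.length - u.length := by omega
  have hsub : ({0, u'.length - u.length} : Finset ℕ) ⊆ occFinset u u' := by
    intro k hk
    rcases Finset.mem_insert.1 hk with rfl | hk
    · exact hd0
    · rw [Finset.mem_singleton] at hk; subst hk; exact hdd
  refine (Finset.eq_of_subset_of_card_le hsub ?_).symm
  rw [← occCount_eq_card, h3, Finset.card_insert_of_notMem (by simpa using hne),
    Finset.card_singleton]

lemma occ_one_of_pprefix_cfr {u u' w : List A} (hu : u ≠ []) (hc : IsCFR u u')
    (hp : u <+: w) (hw : w <+: u') (hne : w ≠ u') : occCount u w = 1 := by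
  have hwl : w.length < u'.length :=
    lt_of_le_of_ne hw.length_le (fun h => hne (hw.eq_of_length h))
  have hsub : occFinset u w ⊆ {0} := by
    intro k hk
    have h1 := mem_occFinset_le hk
    have h2 := occFinset_mono hw hk
    rw [cfr_occFinset hu hc, Finset.mem_insert, Finset.mem_singleton] at h2
    have hul : 0 < u.length := List.length_pos_iff.2 hu
    have hlt := cfr_length_lt hu hc
    rcases h2 with rfl | rfl
    · simp
    · omega
  rw [occCount_eq_card]
  refine le_antisymm (by simpa using Finset.card_le_card hsub) ?_
  have : 0 ∈ occFinset u w := zero_mem_occFinset hp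
  exact Finset.card_pos.2 ⟨0, this⟩

lemma occ_one_dropLast_cfr {u u' : List A} (hu : u ≠ []) (hc : IsCFR u u') :
    u <+: u'.dropLast ∧ occCount u u'.dropLast = 1 := by
  obtain ⟨h1, h2, h3⟩ := cfr_parts hu hc
  have hlt := cfr_length_lt hu hc
  have hul : 0 < u.length := List.length_pos_iff.2 hu
  have hp : u <+: u'.dropLast := by
    rw [List.dropLast_eq_take, List.prefix_take_iff]
    exact ⟨h1, by omega⟩
  refine ⟨hp, ?_⟩
  refine occ_one_of_pprefix_cfr hu hc hp (List.dropLast_prefix u') ?_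
  intro hcon
  have := congrArg List.length hcon
  rw [List.length_dropLast] at this
  omega

/-- The key step lemma: extending a one-occurrence word by a letter either keeps
one occurrence or produces a complete first return. -/
lemma occ_step {u w : List A} (hu : u ≠ []) (hp : u <+: w) (h1 : occCount u w = 1)
    (a : A) : occCount u (w ++ [a]) = 1 ∨
      (u <+: w ++ [a] ∧ u <:+ w ++ [a] ∧ occCount u (w ++ [a]) = 2) := by
  have hsnoc := occFinset_snoc (w := w) (a := a) hu
  have hdisj := occFinset_snoc_disjoint (w := w) (a := a) hu
  have hcard : occCount u (w ++ [a]) = 1 + (if u <:+ w ++ [a] then 1 else 0) := by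
    rw [occCount_eq_card, hsnoc, Finset.card_union_of_disjoint hdisj, ← occCount_eq_card, h1]
    by_cases hs : u <:+ w ++ [a] <;> simp [hs]
  by_cases hs : u <:+ w ++ [a]
  · right
    exact ⟨hp.trans (List.prefix_append w [a]), hs, by rw [hcard, if_pos hs]⟩
  · left
    rw [hcard, if_neg hs]


/-! Minimality and uniform recurrence -/

lemma shift_iterate (ξ : ℕ → A) (n : ℕ) : shift^[n] ξ = fun i => ξ (i + n) := by
  induction n with
  | zero => simp
  | succ m ih =>
    rw [Function.iterate_succ_apply', ih]
    funext i
    simp [shift]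
    congr 1
    omega

lemma shift_iterate_mem {Ξ : Set (ℕ → A)} [TopologicalSpace A] (hΞ : IsSubshift Ξ)
    {ξ : ℕ → A} (hξ : ξ ∈ Ξ) (n : ℕ) : shift^[n] ξ ∈ Ξ := by
  induction n with
  | zero => simpa using hξ
  | succ m ih => rw [Function.iterate_succ_apply']; exact hΞ.shift_mem _ ih

variable [TopologicalSpace A] [DiscreteTopology A]

lemma isOpen_factorAt_set (w : List A) (j : ℕ) : IsOpen {ξ : ℕ → A | FactorAt w ξ j} := by
  have : {ξ : ℕ → A | FactorAt w ξ j} =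
      ⋂ i : Fin w.length, (fun ξ : ℕ → A => ξ (j + i.1)) ⁻¹' {w.get i} := by
    ext ξ
    simp only [Set.mem_iInter, Set.mem_preimage, Set.mem_singleton_iff, Set.mem_setOf_eq]
    rw [factorAt_iff]
    constructor
    · intro h i
      have hi : i.1 < w.length := i.2
      have h2 : w.get i = ξ (j + i.1) := by
        rw [List.get_eq_getElem, List.getElem_of_eq h hi]
        simp [wordAt]
      exact h2.symm
    · intro h
      apply List.ext_getElem
      · simp
      · intro i h1 h2
        have := h ⟨i, h1⟩
        simp [wordAt, List.get_eq_getElem] at this ⊢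
        exact this.symm
  rw [this]
  exact isOpen_iInter_of_finite fun i => (continuous_apply _).isOpen_preimage _ (isOpen_discrete _)

lemma factor_of_mem_of_minimal {Ξ : Set (ℕ → A)} (hmin : IsMinimal Ξ) {w : List A}
    (hw : w ∈ language Ξ) {ξ : ℕ → A} (hξ : ξ ∈ Ξ) : ∃ j, FactorAt w ξ j := by
  obtain ⟨η, hη, k, hk⟩ := hw
  have hcl : η ∈ closure (Set.range fun n => shift^[n] ξ) := hmin ξ hξ hη
  set U : Set (ℕ → A) := ⋂ i : Fin (k + w.length), (fun ζ : ℕ → A => ζ i.1) ⁻¹' {η i.1} with hU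
  have hUo : IsOpen U :=
    isOpen_iInter_of_finite fun i => (continuous_apply _).isOpen_preimage _ (isOpen_discrete _)
  have hηU : η ∈ U := by simp [hU]
  obtain ⟨ζ, hζU, n, hn⟩ := mem_closure_iff.1 hcl U hUo hηU
  refine ⟨n + k, ?_⟩
  rw [factorAt_iff] at hk ⊢
  rw [hk]
  apply List.ext_getElem
  · simp
  · intro i h1 h2
    simp only [wordAt, List.getElem_map, List.getElem_range]
    have hi : i < w.length := by simpa using h1
    have h3 := Set.mem_iInter.1 hζU ⟨k + i, by omega⟩
    simp only [Set.mem_preimage, Set.mem_singleton_iff] at h3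
    rw [← hn] at h3
    have h4 : shift^[n] ξ (k + i) = η (k + i) := h3
    rw [shift_iterate] at h4
    have h5 : n + k + i = k + i + n := by omega
    rw [h5]
    exact h4.symm

lemma uniform_recurrence {Ξ : Set (ℕ → A)} [Finite A] (hΞ : IsSubshift Ξ)
    (hmin : IsMinimal Ξ) {w : List A} (hw : w ∈ language Ξ) :
    ∃ N : ℕ, ∀ ξ ∈ Ξ, ∀ k : ℕ, ∃ j < N, FactorAt w ξ (k + j) := by
  have hcomp : IsCompact Ξ := by
    have : CompactSpace (ℕ → A) := by infer_instance
    exact hΞ.isClosed.isCompact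
  have hcover : Ξ ⊆ ⋃ j : ℕ, {ξ : ℕ → A | FactorAt w ξ j} := by
    intro ξ hξ
    obtain ⟨j, hj⟩ := factor_of_mem_of_minimal hmin hw hξ
    exact Set.mem_iUnion.2 ⟨j, hj⟩
  obtain ⟨t, ht⟩ := hcomp.elim_finite_subcover _ (fun j => isOpen_factorAt_set w j) hcover
  refine ⟨(t.sup id) + 1, ?_⟩
  intro ξ hξ k
  have hmem : shift^[k] ξ ∈ Ξ := shift_iterate_mem hΞ hξ k
  obtain ⟨j, hjt, hj⟩ := by
    have := ht hmem
    simpa using this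
  refine ⟨j, by
    have := Finset.le_sup (f := id) hjt
    simpa using Nat.lt_succ_of_le this, ?_⟩
  rw [factorAt_iff] at hj ⊢
  rw [hj]
  apply List.ext_getElem
  · simp
  · intro i h1 h2
    simp only [wordAt, List.getElem_map, List.getElem_range, shift_iterate]
    congr 1
    omega


/-! Extension of one-occurrence words to complete first returns -/

lemma extend_to_cfr {Ξ : Set (ℕ → A)}
    {u : List A} (hu : u ≠ []) {N : ℕ}
    (hN : ∀ ξ ∈ Ξ, ∀ k : ℕ, ∃ j < N, FactorAt u ξ (k + j))
    {w : List A} (hw : w ∈ language Ξ) (hp : u <+: w) (h1 : occCount u w = 1) :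
    ∃ u', CFRin (language Ξ) u u' ∧ w <+: u' ∧ w ≠ u' ∧ u'.length ≤ u.length + N := by
  obtain ⟨ξ, hξ, k, hk⟩ := hw
  obtain ⟨j, hjN, hj⟩ := hN ξ hξ (k + 1)
  have hex : ∃ t : ℕ, 1 ≤ t ∧ FactorAt u ξ (k + t) := by
    refine ⟨1 + j, by omega, ?_⟩
    have h : k + (1 + j) = k + 1 + j := by omega
    rw [h]; exact hj
  set s := Nat.find hex with hs_def
  obtain ⟨hs1, hsF⟩ : 1 ≤ s ∧ FactorAt u ξ (k + s) := Nat.find_spec hex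
  have hsN : s ≤ N := by
    have hle : s ≤ 1 + j := Nat.find_le (by
      refine ⟨by omega, ?_⟩
      have h : k + (1 + j) = k + 1 + j := by omega
      rw [h]; exact hj)
    omega
  have hsmin : ∀ t, t < s → ¬(1 ≤ t ∧ FactorAt u ξ (k + t)) := fun t ht => Nat.find_min hex ht
  set u' := wordAt ξ k (s + u.length) with hu'def
  have hu'len : u'.length = s + u.length := by simp [hu'def]
  have hu'L : u' ∈ language Ξ := wordAt_mem_language hξ k _
  have hFu : FactorAt u ξ k := factorAt_prefix hp hk
  have hdrop' : ∀ k', u'.drop k' = wordAt ξ (k + k') (s + u.length - k') := by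
    intro k'; rw [hu'def, wordAt_drop]
  have hupre : u <+: u' := by
    rw [hu'def, prefix_wordAt_iff]
    exact ⟨by omega, hFu⟩
  have hsuf : u <:+ u' := by
    have h : u = u'.drop s := by
      rw [hdrop' s]
      have h2 : s + u.length - s = u.length := by omega
      rw [h2]
      exact hsF
    rw [h]; exact List.drop_suffix s u'
  have hoccF : occFinset u u' = {0, s} := by
    ext k'
    rw [mem_occFinset, Finset.mem_insert, Finset.mem_singleton, hu'len]
    constructor
    · rintro ⟨hk1, hk2⟩
      rw [hdrop' k', prefix_wordAt_iff] at hk2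
      obtain ⟨hlen, hF⟩ := hk2
      have hk's : k' ≤ s := by omega
      rcases Nat.eq_zero_or_pos k' with rfl | hpos
      · exact Or.inl rfl
      · rcases lt_or_eq_of_le hk's with hlt | rfl
        · exact absurd ⟨hpos, hF⟩ (hsmin k' hlt)
        · exact Or.inr rfl
    · rintro (rfl | rfl)
      · refine ⟨by omega, ?_⟩
        rw [hdrop' 0, prefix_wordAt_iff]
        exact ⟨by omega, by simpa using hFu⟩
      · refine ⟨by omega, ?_⟩
        rw [hdrop' s, prefix_wordAt_iff]
        exact ⟨by omega, hsF⟩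
  have hocc2 : occCount u u' = 2 := by
    rw [occCount_eq_card, hoccF,
      Finset.card_insert_of_notMem (by rw [Finset.mem_singleton]; omega),
      Finset.card_singleton]
  have hCFR : CFRin (language Ξ) u u' := ⟨hu'L, by
    rw [IsCFR, if_neg hu]; exact ⟨hupre, hsuf, hocc2⟩⟩
  have hwlen : w.length < s + u.length := by
    by_contra hcon
    push_neg at hcon
    have hs_in : s ∈ occFinset u w := by
      rw [mem_occFinset]
      refine ⟨by omega, ?_⟩
      rw [factorAt_iff] at hk
      rw [hk, wordAt_drop, prefix_wordAt_iff]
      exact ⟨by omega, hsF⟩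
    have h0_in : 0 ∈ occFinset u w := zero_mem_occFinset hp
    have hsub : ({0, s} : Finset ℕ) ⊆ occFinset u w := by
      intro x hx
      rcases Finset.mem_insert.1 hx with rfl | hx
      · exact h0_in
      · rw [Finset.mem_singleton] at hx; subst hx; exact hs_in
    have hcard : 2 ≤ (occFinset u w).card := by
      have h2 : ({0, s} : Finset ℕ).card = 2 := by
        rw [Finset.card_insert_of_notMem (by rw [Finset.mem_singleton]; omega),
          Finset.card_singleton]
      rw [← h2]
      exact Finset.card_le_card hsub
    rw [← occCount_eq_card, h1] at hcard
    omega
  have hwpre : w <+: u' := by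
    rw [factorAt_iff] at hk
    rw [hk, hu'def]
    exact wordAt_prefix _ _ (by omega)
  refine ⟨u', hCFR, hwpre, ?_, by omega⟩
  intro hcon
  rw [hcon] at hwlen
  omega


/-! The counting argument -/

lemma aext_add_one {Ξ : Set (ℕ → A)} [Fintype A] {w : List A} (hw : w ∈ language Ξ) :
    aext (language Ξ) w + 1
      = (Finset.univ.filter fun a : A => w ++ [a] ∈ language Ξ).card := by
  obtain ⟨a, ha⟩ := exists_extension hw
  have hcard : Nat.card {a : A // w ++ [a] ∈ language Ξ}
      = (Finset.univ.filter fun a : A => w ++ [a] ∈ language Ξ).card := by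
    rw [Nat.card_eq_fintype_card, Fintype.card_subtype]
  have hpos : 0 < (Finset.univ.filter fun a : A => w ++ [a] ∈ language Ξ).card := by
    refine Finset.card_pos.2 ⟨a, ?_⟩
    rw [Finset.mem_filter]
    exact ⟨Finset.mem_univ a, ha⟩
  rw [aext, hcard]
  omega

lemma rightSpecial_of_aext_ne {Ξ : Set (ℕ → A)} [Fintype A] {w : List A}
    (hw : w ∈ language Ξ) (h : aext (language Ξ) w ≠ 0) :
    RightSpecial (language Ξ) w := by
  rw [aext] at h
  have h2 : 1 < Nat.card {a : A // w ++ [a] ∈ language Ξ} := by omega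
  rw [Nat.card_eq_fintype_card, Fintype.one_lt_card_iff_nontrivial] at h2
  obtain ⟨⟨a, ha⟩, ⟨b, hb⟩, hab⟩ := h2
  exact ⟨hw, a, b, fun h => hab (by simp [h]), ha, hb⟩

lemma one_le_aext_of_rightSpecial {Ξ : Set (ℕ → A)} [Fintype A] {w : List A}
    (h : RightSpecial (language Ξ) w) : 1 ≤ aext (language Ξ) w := by
  obtain ⟨hw, a, b, hab, ha, hb⟩ := h
  have h2 : Nontrivial {a : A // w ++ [a] ∈ language Ξ} :=
    ⟨⟨a, ha⟩, ⟨b, hb⟩, fun h => hab (by simpa using congrArg Subtype.val h)⟩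
  have h3 : 1 < Nat.card {a : A // w ++ [a] ∈ language Ξ} := by
    rw [Nat.card_eq_fintype_card, Fintype.one_lt_card_iff_nontrivial]
    exact h2
  rw [aext]
  omega

lemma main_count {Ξ : Set (ℕ → A)} [Fintype A]
    {u : List A} (hu : u ≠ []) (huL : u ∈ language Ξ) {N : ℕ}
    (hN : ∀ ξ ∈ Ξ, ∀ k : ℕ, ∃ j < N, FactorAt u ξ (k + j)) :
    ∃ (FP FR : Finset (List A)),
      (↑FR : Set (List A)) = {u' | CFRin (language Ξ) u u'} ∧
      (↑FP : Set (List A)) =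
        {w | w ∈ language Ξ ∧ u <+: w ∧ occCount u w = 1} ∧
      FR.card = 1 + ∑ w ∈ FP, aext (language Ξ) w := by
  classical
  set L := language Ξ with hL
  set Pset : Set (List A) := {w | w ∈ L ∧ u <+: w ∧ occCount u w = 1} with hPset
  set Rset : Set (List A) := {u' | CFRin L u u'} with hRset
  -- length bounds
  have hPlen : ∀ w ∈ Pset, w.length < u.length + N := by
    rintro w ⟨hwL, hwp, hw1⟩
    obtain ⟨u', hcfr, hpre, hne, hlen⟩ := extend_to_cfr hu hN hwL hwp hw1
    have : w.length < u'.length :=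
      lt_of_le_of_ne hpre.length_le fun h => hne (hpre.eq_of_length h)
    omega
  have hRP : ∀ w ∈ Rset, w.dropLast ∈ Pset ∧ u.length < w.length := by
    rintro w hw
    obtain ⟨hwL, hcfr⟩ := hw
    obtain ⟨hdp, hd1⟩ := occ_one_dropLast_cfr hu hcfr
    have hlt := cfr_length_lt hu hcfr
    exact ⟨⟨language_prefix_closed (List.dropLast_prefix w) hwL, hdp, hd1⟩, hlt⟩
  have hRlen : ∀ w ∈ Rset, w.length ≤ u.length + N := by
    intro w hw
    obtain ⟨hdP, hlt⟩ := hRP w hw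
    have := hPlen _ hdP
    rw [List.length_dropLast] at this
    omega
  -- finiteness
  have hPfin : Pset.Finite := by
    refine (List.finite_length_le A (u.length + N)).subset ?_
    intro w hw
    exact le_of_lt (hPlen w hw)
  have hRfin : Rset.Finite := (List.finite_length_le A (u.length + N)).subset hRlen
  set FP := hPfin.toFinset with hFP
  set FR := hRfin.toFinset with hFR
  refine ⟨FP, FR, by simp [hFR], by simp [hFP], ?_⟩
  -- the children map
  set child : List A → Finset (List A) :=
    fun w => (Finset.univ.filter fun a : A => w ++ [a] ∈ L).image fun a => w ++ [a]
    with hchild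
  have hmemP : ∀ {w}, w ∈ FP ↔ (w ∈ L ∧ u <+: w ∧ occCount u w = 1) := by
    intro w; rw [hFP, Set.Finite.mem_toFinset]; exact Iff.rfl
  have hmemR : ∀ {w}, w ∈ FR ↔ CFRin L u w := by
    intro w; rw [hFR, Set.Finite.mem_toFinset]; exact Iff.rfl
  -- union decomposition
  have hdecomp : FP ∪ FR = insert u (FP.biUnion child) := by
    ext x
    rw [Finset.mem_union, Finset.mem_insert, Finset.mem_biUnion]
    constructor
    · intro hx
      by_cases hxu : x = u
      · exact Or.inl hxu
      · right
        have hxL : x ∈ L := by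
          rcases hx with hx | hx
          · exact (hmemP.1 hx).1
          · exact (hmemR.1 hx).1
        have hxup : u <+: x := by
          rcases hx with hx | hx
          · exact (hmemP.1 hx).2.1
          · exact (cfr_parts hu (hmemR.1 hx).2).1
        have hxlen : u.length < x.length :=
          lt_of_le_of_ne hxup.length_le fun h => hxu (hxup.eq_of_length h).symm
        have hxne : x ≠ [] := by
          intro hcon; rw [hcon] at hxlen; simp at hxlen
        refine ⟨x.dropLast, ?_, ?_⟩
        · -- dropLast ∈ FP
          rw [hmemP]
          refine ⟨language_prefix_closed (List.dropLast_prefix x) hxL, ?_, ?_⟩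
          · rw [List.dropLast_eq_take, List.prefix_take_iff]
            exact ⟨hxup, by omega⟩
          · rcases hx with hx | hx
            · -- x ∈ FP : occCount of dropLast still 1
              have hx1 := (hmemP.1 hx).2.2
              have hsub := occFinset_mono (List.dropLast_prefix x) (u := u)
              have hup : u <+: x.dropLast := by
                rw [List.dropLast_eq_take, List.prefix_take_iff]
                exact ⟨hxup, by omega⟩
              have hge : 0 ∈ occFinset u x.dropLast := zero_mem_occFinset hup
              have hle : (occFinset u x.dropLast).card ≤ 1 := by
                have := Finset.card_le_card hsub
                rw [← occCount_eq_card, ← occCount_eq_card, hx1] at this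
                rw [← occCount_eq_card]; omega
              rw [occCount_eq_card]
              have : 0 < (occFinset u x.dropLast).card := Finset.card_pos.2 ⟨0, hge⟩
              omega
            · exact (occ_one_dropLast_cfr hu (hmemR.1 hx).2).2
        · -- x ∈ child (dropLast x)
          rw [hchild]
          simp only [Finset.mem_image, Finset.mem_filter, Finset.mem_univ, true_and]
          refine ⟨x.getLast hxne, ?_, List.dropLast_append_getLast hxne⟩
          rw [List.dropLast_append_getLast hxne]
          exact hxL
    · rintro (hxu | ⟨w, hwP, hxc⟩)
      · rw [hxu]
        exact Or.inl (hmemP.2 ⟨huL, List.prefix_refl u, occCount_self hu⟩)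
      · rw [hchild] at hxc
        simp only [Finset.mem_image, Finset.mem_filter, Finset.mem_univ, true_and] at hxc
        obtain ⟨a, haL, rfl⟩ := hxc
        obtain ⟨hwL, hwp, hw1⟩ := hmemP.1 hwP
        rcases occ_step hu hwp hw1 a with h | ⟨h1, h2, h3⟩
        · exact Or.inl (hmemP.2 ⟨haL, hwp.trans (List.prefix_append w [a]), h⟩)
        · refine Or.inr (hmemR.2 ⟨haL, ?_⟩)
          rw [IsCFR, if_neg hu]
          exact ⟨h1, h2, h3⟩
  -- u not a child
  have hunotc : u ∉ FP.biUnion child := by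
    rw [Finset.mem_biUnion]
    rintro ⟨w, hwP, hc⟩
    rw [hchild] at hc
    simp only [Finset.mem_image, Finset.mem_filter, Finset.mem_univ, true_and] at hc
    obtain ⟨a, -, ha⟩ := hc
    have hwp := (hmemP.1 hwP).2.1
    have := hwp.length_le
    have := congrArg List.length ha
    simp at this
    omega
  -- disjointness of children
  have hcdisj : ∀ w₁ ∈ FP, ∀ w₂ ∈ FP, w₁ ≠ w₂ → Disjoint (child w₁) (child w₂) := by
    intro w₁ _ w₂ _ hne
    rw [Finset.disjoint_left]
    intro x hx1 hx2
    rw [hchild] at hx1 hx2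
    simp only [Finset.mem_image, Finset.mem_filter, Finset.mem_univ, true_and] at hx1 hx2
    obtain ⟨a, -, ha⟩ := hx1
    obtain ⟨b, -, hb⟩ := hx2
    apply hne
    have := ha.trans hb.symm
    have h2 := congrArg List.dropLast this
    simpa [List.dropLast_concat] using h2
  -- FP and FR disjoint
  have hPRdisj : Disjoint FP FR := by
    rw [Finset.disjoint_left]
    intro x hxP hxR
    have h1 := (hmemP.1 hxP).2.2
    have h2 := (cfr_parts hu (hmemR.1 hxR).2).2.2
    omega
  -- cardinality computation
  have hcard1 : FP.card + FR.card = 1 + ∑ w ∈ FP, (child w).card := by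
    rw [← Finset.card_union_of_disjoint hPRdisj, hdecomp,
      Finset.card_insert_of_notMem hunotc, Finset.card_biUnion hcdisj]
    omega
  have hchildcard : ∀ w ∈ FP, (child w).card = aext L w + 1 := by
    intro w hwP
    rw [hchild]
    rw [Finset.card_image_of_injective _ (fun a b hab => by simpa using hab)]
    exact (aext_add_one (hmemP.1 hwP).1).symm
  rw [Finset.sum_congr rfl hchildcard, Finset.sum_add_distrib, Finset.sum_const,
    smul_eq_mul, mul_one] at hcard1
  omega

end Aux

/-- For every privileged word `u` of the language of a minimal and
aperiodic right-infinite subshift, `ã(u) = Σ_{r ∈ S(u)} a(r)`; in particular the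
cardinality of `S(u)` is at most `ã(u)`. -/
theorem statement7 {A : Type*} [Fintype A] [DecidableEq A] [TopologicalSpace A]
    [DiscreteTopology A] (Ξ : Set (ℕ → A)) (hΞ : IsSubshift Ξ) (hmin : IsMinimal Ξ)
    (hap : Aperiodic Ξ) (u : List A) (hu : IsPrivileged u) (huL : u ∈ language Ξ) :
    (atil (language Ξ) u = ∑ᶠ r ∈ Sset (language Ξ) u, aext (language Ξ) r) ∧
      (Sset (language Ξ) u).ncard ≤ atil (language Ξ) u := by
  classical
  by_cases h0 : u = []
  · -- the empty word
    subst h0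
    obtain ⟨ξ, hξ⟩ := hΞ.nonempty
    have hletter : ∀ n : ℕ, [ξ n] ∈ language Ξ := by
      intro n
      have h : wordAt ξ n 1 = [ξ n] := by simp [wordAt, List.range_succ]
      rw [← h]; exact wordAt_mem_language hξ n 1
    have hab : ∃ a b : A, a ≠ b ∧ [a] ∈ language Ξ ∧ [b] ∈ language Ξ := by
      by_contra hcon
      push_neg at hcon
      have hconst : ∀ n, ξ n = ξ 0 := by
        intro n
        by_contra hne
        exact (hcon (ξ n) (ξ 0) hne (hletter n)) (hletter 0)
      have hper : shift^[1] ξ = ξ := by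
        funext n
        rw [Function.iterate_one]
        show ξ (n + 1) = ξ n
        rw [hconst (n + 1), hconst n]
      have := hap ξ hξ 1 hper
      omega
    obtain ⟨a, b, hab, haL, hbL⟩ := hab
    have hCFR0 : ∀ u' : List A, CFRin (language Ξ) [] u' ↔ u' ∈ language Ξ ∧ u'.length = 1 := by
      intro u'
      rw [CFRin, IsCFR, if_pos rfl]
    have hScard : Nat.card {u' : List A // CFRin (language Ξ) [] u'}
        = Nat.card {c : A // [c] ∈ language Ξ} := by
      refine (Nat.card_eq_of_bijective
        (fun c => ⟨[c.1], (hCFR0 _).2 ⟨c.2, rfl⟩⟩) ⟨?_, ?_⟩).symm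
      · rintro ⟨c, hc⟩ ⟨d, hd⟩ h
        simpa using congrArg Subtype.val h
      · rintro ⟨u', hu'⟩
        obtain ⟨hL1, hlen⟩ := (hCFR0 u').1 hu'
        obtain ⟨c, rfl⟩ := List.length_eq_one_iff.1 hlen
        exact ⟨⟨c, hL1⟩, rfl⟩
    have h2card : 2 ≤ Nat.card {c : A // [c] ∈ language Ξ} := by
      have hnt : Nontrivial {c : A // [c] ∈ language Ξ} :=
        ⟨⟨a, haL⟩, ⟨b, hbL⟩, fun h => hab (by simpa using congrArg Subtype.val h)⟩
      rw [Nat.card_eq_fintype_card]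
      exact Fintype.one_lt_card_iff_nontrivial.2 hnt
    have hS : Sset (language Ξ) [] = {([] : List A)} := by
      ext r
      simp only [Sset, Set.mem_setOf_eq, Set.mem_singleton_iff]
      constructor
      · rintro ⟨hRS, u', hcfr, hpre, hp2, hne⟩
        have hlen1 := ((hCFR0 u').1 hcfr).2
        have hlt : r.length < u'.length :=
          lt_of_le_of_ne hp2.length_le fun h => hne (hp2.eq_of_length h)
        rw [← List.length_eq_zero_iff]
        omega
      · rintro rfl
        refine ⟨⟨language_prefix_closed (List.nil_prefix) haL, a, b, hab,
          by simpa using haL, by simpa using hbL⟩, [a], (hCFR0 [a]).2 ⟨haL, rfl⟩,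
          List.nil_prefix, List.nil_prefix, by simp⟩
    have hatil : atil (language Ξ) [] = Nat.card {c : A // [c] ∈ language Ξ} - 1 := by
      rw [atil, if_pos hu, hScard]
    have haext : aext (language Ξ) [] = Nat.card {c : A // [c] ∈ language Ξ} - 1 := by
      rw [aext]
      congr 2
    constructor
    · rw [hS, finsum_mem_singleton, hatil, haext]
    · rw [hS, Set.ncard_singleton, hatil]
      omega
  · -- the nonempty case
    obtain ⟨N, hN⟩ := uniform_recurrence hΞ hmin huL
    obtain ⟨FP, FR, hFRs, hFPs, hcount⟩ := main_count h0 huL hN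
    set FS := FP.filter (RightSpecial (language Ξ)) with hFS
    have hmemP : ∀ {w : List A},
        w ∈ FP ↔ w ∈ language Ξ ∧ u <+: w ∧ occCount u w = 1 := by
      intro w
      rw [← Finset.mem_coe, hFPs]
      exact Iff.rfl
    have hSeq : Sset (language Ξ) u = ↑FS := by
      ext r
      rw [Finset.mem_coe, hFS, Finset.mem_filter, hmemP]
      constructor
      · rintro ⟨hRS, u', hcfr, hur, hp2, hne⟩
        exact ⟨⟨hRS.1, hur, occ_one_of_pprefix_cfr h0 hcfr.2 hur hp2 hne⟩, hRS⟩
      · rintro ⟨⟨hrL, hur, h1⟩, hRS⟩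
        obtain ⟨u', hcfr, hpre, hne, -⟩ := extend_to_cfr h0 hN hrL hur h1
        exact ⟨hRS, u', hcfr, hur, hpre, hne⟩
    have hatil : atil (language Ξ) u = ∑ w ∈ FP, aext (language Ξ) w := by
      rw [atil, if_pos hu]
      have hnc : Nat.card {u' : List A // CFRin (language Ξ) u u'} = FR.card := by
        have h1 : Nat.card {u' : List A // CFRin (language Ξ) u u'}
            = Set.ncard {u' | CFRin (language Ξ) u u'} :=
          Nat.card_coe_set_eq _
        rw [h1, ← hFRs, Set.ncard_coe_finset]
      rw [hnc, hcount]
      omega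
    have hsum : ∑ w ∈ FP, aext (language Ξ) w = ∑ r ∈ FS, aext (language Ξ) r := by
      rw [hFS]
      exact (Finset.sum_filter_of_ne
        (fun x hx hne => rightSpecial_of_aext_ne (hmemP.1 hx).1 hne)).symm
    constructor
    · rw [hSeq, finsum_mem_coe_finset, hatil, hsum]
    · rw [hSeq, Set.ncard_coe_finset, hatil, hsum]
      calc FS.card = ∑ _r ∈ FS, 1 := by rw [Finset.sum_const, smul_eq_mul, mul_one]
        _ ≤ ∑ r ∈ FS, aext (language Ξ) r :=
          Finset.sum_le_sum fun r hr =>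
            one_le_aext_of_rightSpecial (Finset.mem_filter.1 hr).2


end Arx1111
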